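/- For every c > 0 and z > 0 and y > 0, inf_{τ > 0} exp(-τy + c(e^{τz} - τz - 1)) = exp(-c · g(y/(cz))), where g(u) = (1+u)log(1+u) - u; the infimum is attained at τ = z⁻¹ log(1 + y/(cz)). -/

import Mathlib

open Real Set

theorem stmt10 (c z y : ℝ) (hc : 0 < c) (hz : 0 < z) (hy : 0 < y)
    (g : ℝ → ℝ) (hg : ∀ u : ℝ, g u = (1 + u) * Real.log (1 + u) - u) :
    sInf ((fun τ : ℝ => Real.exp (-τ * y + c * (Real.exp (τ * z) - τ * z - 1))) ''
        Set.Ioi (0 : ℝ)) = Real.exp (-c * g (y / (c * z))) ∧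
    (fun τ : ℝ => Real.exp (-τ * y + c * (Real.exp (τ * z) - τ * z - 1)))
        (z⁻¹ * Real.log (1 + y / (c * z))) = Real.exp (-c * g (y / (c * z))) := by
  set u : ℝ := y / (c * z) with hu
  have hcz : 0 < c * z := mul_pos hc hz
  have hu0 : 0 < u := div_pos hy hcz
  have hy' : y = c * z * u := by rw [hu]; field_simp [hcz.ne']
  set L : ℝ := Real.log (1 + u) with hL
  have h1u : (0:ℝ) < 1 + u := by linarith
  have hL0 : 0 < L := Real.log_pos (by linarith)
  have hexpL : Real.exp L = 1 + u := Real.exp_log h1u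
  set τ₀ : ℝ := z⁻¹ * L with hτ₀
  have hτ₀z : τ₀ * z = L := by rw [hτ₀]; field_simp [hz.ne']
  have hτ₀pos : 0 < τ₀ := mul_pos (inv_pos.mpr hz) hL0
  have hgu : g u = (1 + u) * L - u := hg u
  have hτy : τ₀ * y = c * u * L := by
    rw [hy']
    calc τ₀ * (c * z * u) = (τ₀ * z) * (c * u) := by ring
    _ = c * u * L := by rw [hτ₀z]; ring
  have hval : Real.exp (-τ₀ * y + c * (Real.exp (τ₀ * z) - τ₀ * z - 1))
      = Real.exp (-c * g u) := by
    rw [hτ₀z, hexpL, hgu]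
    congr 1
    nlinarith [hτy]
  refine ⟨?_, hval⟩
  apply IsLeast.csInf_eq
  constructor
  · exact ⟨τ₀, hτ₀pos, hval⟩
  · rintro x ⟨τ, hτ, rfl⟩
    apply Real.exp_le_exp.mpr
    have key : 1 + (τ * z - L) ≤ Real.exp (τ * z - L) := by linarith [Real.add_one_le_exp (τ * z - L)]
    have hexp : (1 + u) * (1 + (τ * z - L)) ≤ Real.exp (τ * z) := by
      have h2 : Real.exp (τ * z) = (1 + u) * Real.exp (τ * z - L) := by
        rw [← hexpL, ← Real.exp_add]; ring_nf
      rw [h2]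
      exact mul_le_mul_of_nonneg_left key (le_of_lt h1u)
    rw [hgu, hy']
    nlinarith [hexp, hc.le]
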